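/- Let R be a commutative ring with unity and J ⊊ R an ideal contained in only finitely many maximal ideals of R. Then J satisfies the unital set condition: for every integer k ≥ 2 and every a_1,…,a_k ∈ R with (a_1)+⋯+(a_k) = R, there exists a in the ideal (a_2,…,a_k) such that a_1 + a is a unit modulo J. -/

import Mathlib

/-- Let `R` be a commutative ring with unity and `J ⊊ R` an ideal contained in
only finitely many maximal ideals. Then `J` satisfies the unital set condition: for every
`k ≥ 2` and every unital tuple `a_1, …, a_k` there is `a ∈ (a_2, …, a_k)` such that
`a_1 + a` is a unit modulo `J`. -/
theorem usc_of_finitely_many_maximal {R : Type*} [CommRing R] (J : Ideal R) (hJ : J ≠ ⊤)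
    (hfin : {M : Ideal R | M.IsMaximal ∧ J ≤ M}.Finite) :
    ∀ k : ℕ, ∀ _ : 2 ≤ k, ∀ a : Fin k → R, (∑ i, Ideal.span {a i} = ⊤) →
      ∃ b ∈ Ideal.span (a '' {i | (i : ℕ) ≠ 0}),
        IsUnit (Ideal.Quotient.mk J (a ⟨0, by omega⟩ + b)) := by
  intro k hk a hsum
  set a0 : R := a ⟨0, by omega⟩ with ha0
  set I : Ideal R := Ideal.span (a '' {i | (i : ℕ) ≠ 0}) with hI
  -- The unital condition gives span {a0} ⊔ I = ⊤
  have hsup : Ideal.span {a0} ⊔ I = ⊤ := by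
    rw [eq_top_iff, ← hsum]
    rw [Ideal.sum_eq_sup]
    refine Finset.sup_le ?_
    intro i _
    by_cases h0 : (i : ℕ) = 0
    · have : a i = a0 := by
        rw [ha0]; congr 1; exact Fin.ext h0
      rw [this]
      exact le_trans le_sup_left (le_refl _)
    · refine le_trans ?_ le_sup_right
      rw [hI]
      exact Ideal.span_mono (Set.singleton_subset_iff.mpr ⟨i, h0, rfl⟩)
  -- key: x is a unit mod J iff x avoids all maximal ideals over J
  have hunit : ∀ x : R, (∀ M : Ideal R, M.IsMaximal → J ≤ M → x ∉ M) →
      IsUnit (Ideal.Quotient.mk J x) := by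
    intro x hx
    by_contra h
    have hne : Ideal.span {Ideal.Quotient.mk J x} ≠ ⊤ := by
      rwa [Ne, Ideal.span_singleton_eq_top]
    obtain ⟨m, hm, hxm⟩ := Ideal.exists_le_maximal _ hne
    have hxm' : Ideal.Quotient.mk J x ∈ m := hxm (Ideal.subset_span rfl)
    have hMmax : (m.comap (Ideal.Quotient.mk J)).IsMaximal :=
      Ideal.comap_isMaximal_of_surjective _ Ideal.Quotient.mk_surjective
    have hJM : J ≤ m.comap (Ideal.Quotient.mk J) := by
      intro j hj
      simp [Ideal.mem_comap, Ideal.Quotient.eq_zero_iff_mem.mpr hj]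
    exact hx _ hMmax hJM hxm'
  -- finite sets of maximal ideals over J containing / not containing a0
  have hS : {M : Ideal R | M.IsMaximal ∧ J ≤ M ∧ a0 ∈ M}.Finite :=
    hfin.subset (fun M hM => ⟨hM.1, hM.2.1⟩)
  have hT : {M : Ideal R | M.IsMaximal ∧ J ≤ M ∧ a0 ∉ M}.Finite :=
    hfin.subset (fun M hM => ⟨hM.1, hM.2.1⟩)
  set K : Ideal R := I ⊓ (hT.toFinset.inf id) with hK
  have hprod : I * (hT.toFinset.prod id) ≤ K := by
    refine le_inf Ideal.mul_le_left ?_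
    exact le_trans Ideal.mul_le_right (Ideal.prod_le_inf)
  have hnotle : ∀ M ∈ hS.toFinset, ¬ K ≤ M := by
    intro M hM hle
    rw [Set.Finite.mem_toFinset] at hM
    obtain ⟨hMmax, hJM, ha0M⟩ := hM
    rcases hMmax.isPrime.mul_le.mp (le_trans hprod hle) with hIM | hPM
    · have : (⊤ : Ideal R) ≤ M := by
        rw [← hsup]
        exact sup_le ((Ideal.span_singleton_le_iff_mem _).mpr ha0M) hIM
      exact hMmax.ne_top (top_le_iff.mp this)
    · obtain ⟨M', hM', hM'M⟩ := (Ideal.IsPrime.prod_le hMmax.isPrime).mp hPM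
      rw [Set.Finite.mem_toFinset] at hM'
      obtain ⟨hM'max, _, ha0M'⟩ := hM'
      have : M' = M := hM'max.eq_of_le hMmax.ne_top hM'M
      exact ha0M' (this ▸ ha0M)
  -- prime avoidance
  have havoid : ¬ (K : Set R) ⊆ ⋃ M ∈ hS.toFinset, (M : Set R) := by
    intro hsub
    obtain ⟨M, hM, hKM⟩ := (Ideal.subset_union_prime ⊥ ⊥
      (fun M hM _ _ => by
        rw [Set.Finite.mem_toFinset] at hM
        exact hM.1.isPrime)).mp hsub
    exact hnotle M hM hKM
  obtain ⟨b, hbK, hbS⟩ := Set.not_subset.mp havoid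
  refine ⟨b, (inf_le_left : K ≤ I) hbK, ?_⟩
  apply hunit
  intro M hMmax hJM hmem
  by_cases ha0M : a0 ∈ M
  · have hMS : M ∈ hS.toFinset := by
      rw [Set.Finite.mem_toFinset]; exact ⟨hMmax, hJM, ha0M⟩
    have hbM : b ∈ M := by
      have : a0 + b - a0 ∈ M := M.sub_mem hmem ha0M
      simpa using this
    exact hbS (Set.mem_biUnion hMS hbM)
  · have hMT : M ∈ hT.toFinset := by
      rw [Set.Finite.mem_toFinset]; exact ⟨hMmax, hJM, ha0M⟩
    have hbM : b ∈ M := (inf_le_right.trans (Finset.inf_le hMT) : K ≤ M) hbK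
    have : a0 + b - b ∈ M := M.sub_mem hmem hbM
    simp at this
    exact ha0M this
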